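/- Let C be a braided monoidal category, A a commutative algebra in C (or more generally, an algebra), and M a module category of A-bimodules. Define α⁺, α⁻ : C → (A-bimodules) by α±(X) = A ⊗ X with right action twisted by the braiding β (for α⁺) or the inverse braiding (for α⁻). Then α⁺ and α⁻ are monoidal functors, i.e., there are natural isomorphisms α±(X ⊗ Y) ≅ α±(X) ⊗_A α±(Y) compatible with associativity, as a consequence of the hexagon axioms. -/

import Mathlib

set_option linter.unusedSectionVars false


open CategoryTheory MonoidalCategory CategoryTheory.Limits

universe v₁ u₁

variable {C : Type u₁} [Category.{v₁} C] [MonoidalCategory C]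

section

variable [HasCoequalizers C]
  [∀ X : C, PreservesColimitsOfSize.{0, 0} (tensorLeft X)]
  [∀ X : C, PreservesColimitsOfSize.{0, 0} (tensorRight X)]
  {A : Mon C}

/-- A functor `F : C ⥤ Bimod A A` is monoidal (with respect to the tensor product
`⊗_A` of bimodules) if it comes with natural isomorphisms
`F(X ⊗ Y) ≅ F(X) ⊗_A F(Y)` compatible with the associativity constraints. -/
noncomputable def IsMonoidalOnBimod (F : C ⥤ Bimod A A) : Prop :=
  ∃ μ : ∀ X Y : C, F.obj (X ⊗ Y) ≅ (F.obj X).tensorBimod (F.obj Y),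
    (∀ {X X' Y Y' : C} (f : X ⟶ X') (g : Y ⟶ Y'),
      F.map (f ⊗ₘ g) ≫ (μ X' Y').hom =
        (μ X Y).hom ≫ Bimod.whiskerRight (F.map f) (F.obj Y) ≫
          Bimod.whiskerLeft (F.obj X') (F.map g)) ∧
    (∀ X Y Z : C,
      (μ (X ⊗ Y) Z).hom ≫ Bimod.whiskerRight (μ X Y).hom (F.obj Z) ≫
          (Bimod.associatorBimod (F.obj X) (F.obj Y) (F.obj Z)).hom =
        F.map (α_ X Y Z).hom ≫ (μ X (Y ⊗ Z)).hom ≫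
          Bimod.whiskerLeft (F.obj X) (μ Y Z).hom)

end

namespace AlphaInduction

variable [BraidedCategory C] [HasCoequalizers C]
  [∀ X : C, PreservesColimitsOfSize.{0, 0} (tensorLeft X)]
  [∀ X : C, PreservesColimitsOfSize.{0, 0} (tensorRight X)]
  {A : Mon C}

/-- Twisted extension of a bimodule by an object, using the braiding on the right. -/
@[simps, reducible]
noncomputable def twistObj (P : Bimod A A) (Y : C) : Bimod A A where
  X := P.X ⊗ Y
  actLeft := (α_ A.X P.X Y).inv ≫ (P.actLeft ▷ Y)
  actRight := (α_ P.X Y A.X).hom ≫ (P.X ◁ (β_ Y A.X).hom) ≫ (α_ P.X A.X Y).inv ≫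
    (P.actRight ▷ Y)
  one_actLeft := by
    slice_lhs 1 2 => rw [associator_inv_naturality_left]
    slice_lhs 2 3 => rw [← comp_whiskerRight, Bimod.one_actLeft]
    monoidal
  left_assoc := by
    slice_lhs 1 2 => rw [associator_inv_naturality_left]
    slice_lhs 2 3 => rw [← comp_whiskerRight, Bimod.left_assoc, comp_whiskerRight,
      comp_whiskerRight]
    slice_rhs 2 2 => rw [MonoidalCategory.whiskerLeft_comp]
    slice_rhs 3 4 => rw [associator_inv_naturality_middle]
    monoidal
  actRight_one := by
    slice_lhs 1 2 => rw [associator_naturality_right]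
    slice_lhs 2 3 => rw [← MonoidalCategory.whiskerLeft_comp,
      BraidedCategory.braiding_naturality_right, MonoidalCategory.whiskerLeft_comp]
    slice_lhs 3 4 => rw [associator_inv_naturality_middle]
    slice_lhs 4 5 => rw [← comp_whiskerRight, Bimod.actRight_one]
    simp
  right_assoc := by
    simp only [comp_whiskerRight, Category.assoc]
    slice_rhs 5 6 => rw [associator_naturality_left]
    slice_rhs 6 7 => rw [← whisker_exchange]
    slice_rhs 7 8 => rw [associator_inv_naturality_left]
    slice_rhs 8 9 => rw [← comp_whiskerRight]
    have h : (P.actRight ▷ A.X) ≫ P.actRight =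
        (α_ P.X A.X A.X).hom ≫ (P.X ◁ (MonObj.mul (X := A.X))) ≫ P.actRight := by
      rw [Bimod.right_assoc, Iso.hom_inv_id_assoc]
    rw [h]
    simp only [comp_whiskerRight, Category.assoc]
    slice_lhs 1 2 => rw [associator_naturality_right]
    slice_lhs 2 3 => rw [← MonoidalCategory.whiskerLeft_comp,
      BraidedCategory.braiding_naturality_right, MonoidalCategory.whiskerLeft_comp]
    rw [BraidedCategory.braiding_tensor_right_hom]
    simp only [MonoidalCategory.whiskerLeft_comp, comp_whiskerRight, Category.assoc]
    slice_lhs 7 8 => rw [associator_inv_naturality_middle]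
    monoidal
  middle_assoc := by
    simp only [comp_whiskerRight, MonoidalCategory.whiskerLeft_comp, Category.assoc]
    slice_lhs 2 3 => rw [associator_naturality_left]
    slice_lhs 3 4 => rw [← whisker_exchange]
    slice_lhs 4 5 => rw [associator_inv_naturality_left]
    slice_lhs 5 6 => rw [← comp_whiskerRight, Bimod.middle_assoc, comp_whiskerRight,
      comp_whiskerRight]
    slice_rhs 5 6 => rw [associator_inv_naturality_middle]
    monoidal

/-- Functoriality of the twisted extension. -/
@[simps]
noncomputable def twistMap (P : Bimod A A) {Y Y' : C} (f : Y ⟶ Y') :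
    twistObj P Y ⟶ twistObj P Y' where
  hom := P.X ◁ f
  left_act_hom := by
    dsimp
    slice_rhs 1 2 => rw [associator_inv_naturality_right]
    slice_rhs 2 3 => rw [whisker_exchange]
    simp
  right_act_hom := by
    dsimp
    slice_lhs 4 5 => rw [← whisker_exchange]
    slice_rhs 1 2 => rw [associator_naturality_middle]
    slice_rhs 2 3 => rw [← MonoidalCategory.whiskerLeft_comp,
      BraidedCategory.braiding_naturality_left, MonoidalCategory.whiskerLeft_comp]
    slice_rhs 3 4 => rw [associator_inv_naturality_right]
    simp

/-- A reducible copy of `Bimod.regular A`. -/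
abbrev regularR (A : Mon C) : Bimod A A where
  X := A.X
  actLeft := MonObj.mul
  actRight := MonObj.mul
  one_actLeft := (Bimod.regular A).one_actLeft
  left_assoc := (Bimod.regular A).left_assoc
  actRight_one := (Bimod.regular A).actRight_one
  right_assoc := (Bimod.regular A).right_assoc
  middle_assoc := (Bimod.regular A).middle_assoc

/-- The object `A ⊗ X`, as an `A`-bimodule with right action twisted by the braiding. -/
noncomputable abbrev alphaObj (A : Mon C) (X : C) : Bimod A A :=
  twistObj (regularR A) X

/-- The functor `α⁺ : C ⥤ Bimod A A`. -/
@[simps obj map, reducible]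
noncomputable def alphaFunctor (A : Mon C) : C ⥤ Bimod A A where
  obj X := alphaObj A X
  map f := twistMap _ f
  map_id X := by ext; simp
  map_comp f g := by ext; simp

/-- The coequalizer underlying `P ⊗_A (A ⊗ Y)`. -/
noncomputable abbrev tensorX (P : Bimod A A) (Y : C) : C :=
  coequalizer (P.actRight ▷ (alphaObj A Y).X)
    ((α_ P.X A.X (alphaObj A Y).X).hom ≫ (P.X ◁ (alphaObj A Y).actLeft))

/-- The canonical map `P ⊗_A (A ⊗ Y) ⟶ P ⊗ Y`. -/
noncomputable def toTensor (P : Bimod A A) (Y : C) :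
    tensorX P Y ⟶ P.X ⊗ Y :=
  coequalizer.desc ((α_ P.X A.X Y).inv ≫ (P.actRight ▷ Y))
    (by
      dsimp
      slice_lhs 1 2 => rw [associator_inv_naturality_left]
      slice_lhs 2 3 => rw [← comp_whiskerRight]
      have h : (P.actRight ▷ A.X) ≫ P.actRight =
          (α_ P.X A.X A.X).hom ≫ (P.X ◁ (MonObj.mul (X := A.X))) ≫ P.actRight := by
        rw [Bimod.right_assoc, Iso.hom_inv_id_assoc]
      rw [h]
      simp only [comp_whiskerRight, MonoidalCategory.whiskerLeft_comp, Category.assoc]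
      slice_rhs 3 4 => rw [associator_inv_naturality_middle]
      monoidal)

theorem π_toTensor (P : Bimod A A) (Y : C) :
    coequalizer.π _ _ ≫ toTensor P Y = (α_ P.X A.X Y).inv ≫ (P.actRight ▷ Y) :=
  coequalizer.π_desc _ _

/-- The canonical map `P ⊗ Y ⟶ P ⊗_A (A ⊗ Y)`. -/
noncomputable def fromTensor (P : Bimod A A) (Y : C) :
    P.X ⊗ Y ⟶ tensorX P Y :=
  (P.X ◁ ((λ_ Y).inv ≫ ((MonObj.one (X := A.X)) ▷ Y))) ≫ coequalizer.π _ _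

theorem to_from (P : Bimod A A) (Y : C) : toTensor P Y ≫ fromTensor P Y = 𝟙 _ := by
  dsimp only [toTensor, fromTensor]
  apply coequalizer.hom_ext
  dsimp only [twistObj_X, Bimod.regular_X]
  slice_lhs 1 2 => rw [coequalizer.π_desc]
  slice_lhs 2 3 => rw [← whisker_exchange]
  slice_lhs 3 4 => rw [coequalizer.condition]
  slice_lhs 2 3 => rw [associator_naturality_right]
  have h1 : A.X ◁ ((λ_ Y).inv ≫ (MonObj.one (X := A.X)) ▷ Y) ≫ (α_ A.X A.X Y).inv ≫ (MonObj.mul (X := A.X)) ▷ Y =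
      𝟙 (A.X ⊗ Y) := by
    rw [MonoidalCategory.whiskerLeft_comp]
    slice_lhs 2 3 => rw [associator_inv_naturality_middle]
    slice_lhs 3 4 => rw [← comp_whiskerRight, MonObj.mul_one]
    monoidal
  simp only [Category.assoc]
  slice_lhs 3 4 => rw [← MonoidalCategory.whiskerLeft_comp]
  rw [h1]
  simp only [MonoidalCategory.whiskerLeft_id, Category.comp_id, Iso.inv_hom_id_assoc]
  simp

theorem from_to (P : Bimod A A) (Y : C) : fromTensor P Y ≫ toTensor P Y = 𝟙 _ := by
  dsimp only [toTensor, fromTensor]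
  slice_lhs 2 3 => rw [coequalizer.π_desc]
  rw [MonoidalCategory.whiskerLeft_comp]
  slice_lhs 2 3 => rw [associator_inv_naturality_middle]
  slice_lhs 3 4 => rw [← comp_whiskerRight, Bimod.actRight_one]
  monoidal

theorem toTensor_left_act (P : Bimod A A) (Y : C) :
    (P.tensorBimod (alphaObj A Y)).actLeft ≫ toTensor P Y =
      (A.X ◁ toTensor P Y) ≫ (twistObj P Y).actLeft := by
  dsimp only [toTensor, Bimod.tensorBimod_actLeft, twistObj_actLeft]
  refine (cancel_epi ((tensorLeft _).map (coequalizer.π _ _))).1 ?_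
  rw [curriedTensor_obj_map]
  erw [← Category.assoc, Bimod.TensorBimod.whiskerLeft_π_actLeft]
  erw [Category.assoc, Category.assoc, coequalizer.π_desc]
  dsimp only [twistObj_X, Bimod.regular_X]
  slice_lhs 2 3 => rw [associator_inv_naturality_left]
  slice_lhs 3 4 => rw [← comp_whiskerRight, Bimod.middle_assoc, comp_whiskerRight,
    comp_whiskerRight]
  slice_rhs 1 2 => rw [← MonoidalCategory.whiskerLeft_comp, coequalizer.π_desc,
    MonoidalCategory.whiskerLeft_comp]
  slice_rhs 2 3 => rw [associator_inv_naturality_middle]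
  monoidal

theorem toTensor_right_act (P : Bimod A A) (Y : C) :
    (P.tensorBimod (alphaObj A Y)).actRight ≫ toTensor P Y =
      (toTensor P Y ▷ A.X) ≫ (twistObj P Y).actRight := by
  dsimp only [toTensor, Bimod.tensorBimod_actRight, twistObj_actRight]
  refine (cancel_epi ((tensorRight _).map (coequalizer.π _ _))).1 ?_
  rw [Functor.flip_obj_map, curriedTensor_map_app]
  erw [← Category.assoc, Bimod.TensorBimod.π_tensor_id_actRight]
  erw [Category.assoc, Category.assoc, coequalizer.π_desc]
  dsimp only [twistObj_actRight, Bimod.regular_X, Bimod.regular_actRight]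
  simp only [MonoidalCategory.whiskerLeft_comp, comp_whiskerRight, Category.assoc]
  slice_lhs 5 6 => rw [associator_inv_naturality_middle]
  have h : (P.X ◁ (MonObj.mul (X := A.X))) ≫ P.actRight =
      (α_ P.X A.X A.X).inv ≫ (P.actRight ▷ A.X) ≫ P.actRight := P.right_assoc
  slice_lhs 6 7 => rw [← comp_whiskerRight, h, comp_whiskerRight, comp_whiskerRight]
  slice_rhs 1 2 => rw [← comp_whiskerRight, coequalizer.π_desc, comp_whiskerRight]
  slice_rhs 2 3 => rw [associator_naturality_left]
  slice_rhs 3 4 => rw [← whisker_exchange]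
  slice_rhs 4 5 => rw [associator_inv_naturality_left]
  monoidal

/-- `P ⊗_A (A ⊗ Y) ≅ P ⋉ Y` as bimodules. -/
noncomputable def tensorFreeIso (P : Bimod A A) (Y : C) :
    P.tensorBimod (alphaObj A Y) ≅ twistObj P Y :=
  Bimod.isoOfIso ⟨toTensor P Y, fromTensor P Y, to_from P Y, from_to P Y⟩
    (toTensor_left_act P Y) (toTensor_right_act P Y)

theorem assoc_left_act (X Y : C) :
    (twistObj (alphaObj A X) Y).actLeft ≫ (α_ A.X X Y).hom =
      (A.X ◁ (α_ A.X X Y).hom) ≫ (alphaObj A (X ⊗ Y)).actLeft := by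
  dsimp only [twistObj_actLeft, Bimod.regular_X, Bimod.regular_actLeft]
  simp only [comp_whiskerRight, Category.assoc]
  slice_lhs 3 4 => rw [associator_naturality_left]
  monoidal

theorem assoc_right_act (X Y : C) :
    (twistObj (alphaObj A X) Y).actRight ≫ (α_ A.X X Y).hom =
      ((α_ A.X X Y).hom ▷ A.X) ≫ (alphaObj A (X ⊗ Y)).actRight := by
  dsimp only [twistObj_actRight, twistObj_X, Bimod.regular_X, Bimod.regular_actRight]
  rw [BraidedCategory.braiding_tensor_left_hom]
  simp only [MonoidalCategory.whiskerLeft_comp, comp_whiskerRight, Category.assoc]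
  slice_lhs 7 8 => rw [associator_naturality_left]
  monoidal

/-- `(A ⋉ X) ⋉ Y ≅ A ⋉ (X ⊗ Y)` as bimodules. -/
noncomputable def assocIso (X Y : C) :
    twistObj (alphaObj A X) Y ≅ alphaObj A (X ⊗ Y) :=
  Bimod.isoOfIso (α_ A.X X Y) (assoc_left_act X Y) (assoc_right_act X Y)

/-- The monoidal structure isomorphism for `α⁺`. -/
noncomputable def muIso (X Y : C) :
    alphaObj A (X ⊗ Y) ≅ (alphaObj A X).tensorBimod (alphaObj A Y) :=
  (assocIso X Y).symm ≪≫ (tensorFreeIso (alphaObj A X) Y).symm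

theorem muIso_hom_hom (X Y : C) :
    (muIso (A := A) X Y).hom.hom = (α_ A.X X Y).inv ≫ fromTensor (alphaObj A X) Y := by
  simp [muIso, assocIso, tensorFreeIso]
  rfl

theorem alpha_monoidal (A : Mon C) : IsMonoidalOnBimod (alphaFunctor A) := by
  refine ⟨fun X Y => muIso X Y, fun {X X' Y Y'} f g => ?_, fun X Y Z => ?_⟩
  · apply Bimod.hom_ext
    simp only [Bimod.comp_hom']
    simp only [Bimod.comp_hom', muIso_hom_hom, alphaFunctor_map, alphaFunctor_obj,
      twistMap_hom, Bimod.whiskerRight_hom, Bimod.whiskerLeft_hom, Bimod.regular_X]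
    dsimp only [fromTensor, twistObj_X, Bimod.regular_X]
    delta Bimod.tensorBimod
    dsimp only
    delta Bimod.TensorBimod.X
    simp only [Category.assoc]
    slice_rhs 3 4 => rw [ι_colimMap, parallelPairHom_app_one]
    slice_rhs 4 5 => rw [ι_colimMap, parallelPairHom_app_one]
    slice_rhs 2 3 => rw [whisker_exchange]
    slice_rhs 3 4 => rw [← MonoidalCategory.whiskerLeft_comp]
    have hu : ((λ_ Y).inv ≫ ((MonObj.one (X := A.X)) ▷ Y)) ≫ (A.X ◁ g) =
        g ≫ ((λ_ Y').inv ≫ ((MonObj.one (X := A.X)) ▷ Y')) := by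
      slice_lhs 2 3 => rw [← whisker_exchange]
      slice_lhs 1 2 => rw [← leftUnitor_inv_naturality]
      simp
    rw [hu]
    rw [MonoidalCategory.tensorHom_def]
    simp only [MonoidalCategory.whiskerLeft_comp, Category.assoc]
    slice_lhs 2 3 => rw [associator_inv_naturality_right]
    slice_lhs 1 2 => rw [associator_inv_naturality_middle]
    simp
  · apply Bimod.hom_ext
    simp only [Bimod.comp_hom']
    simp only [Bimod.comp_hom', muIso_hom_hom, alphaFunctor_map, alphaFunctor_obj,
      twistMap_hom, Bimod.whiskerRight_hom, Bimod.whiskerLeft_hom, Bimod.regular_X,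
      Bimod.associatorBimod, Bimod.isoOfIso_hom_hom]
    dsimp only [fromTensor, Bimod.AssociatorBimod.hom, twistObj_X, Bimod.regular_X]
    delta Bimod.tensorBimod
    dsimp only
    delta Bimod.TensorBimod.X
    simp only [Category.assoc]
    erw [ι_colimMap_assoc, parallelPairHom_app_one, coequalizer.π_desc]
    dsimp only [Bimod.AssociatorBimod.homAux, twistObj_X, Bimod.regular_X]
    delta Bimod.tensorBimod
    dsimp only
    delta Bimod.TensorBimod.X
    simp only [comp_whiskerRight, Category.assoc]
    erw [π_tensor_id_preserves_coequalizer_inv_desc]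
    erw [ι_colimMap, parallelPairHom_app_one]
    -- now chase in C
    slice_lhs 4 5 => rw [associator_naturality_middle]
    slice_lhs 2 3 => rw [whisker_exchange]
    slice_lhs 3 4 => rw [associator_naturality_right]
    simp only [MonoidalCategory.whiskerLeft_comp, Category.assoc]
    slice_lhs 5 6 => rw [← MonoidalCategory.whiskerLeft_comp, whisker_exchange,
      MonoidalCategory.whiskerLeft_comp]
    monoidal

end AlphaInduction

/-- α-induction: let `C` be a braided monoidal category (with
coequalizers preserved by tensoring) and `A` an algebra in `C`.  There are functors
`α⁺, α⁻ : C ⥤ Bimod A A`, with `α^±(X) = A ⊗ X` as a left module (left action by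
multiplication), right action twisted by the braiding `β_{X,A}` (for `α⁺`) resp. by the
inverse braiding `β_{A,X}⁻¹` (for `α⁻`), and both functors are monoidal: there are
natural isomorphisms `α^±(X ⊗ Y) ≅ α^±(X) ⊗_A α^±(Y)` compatible with associativity
(a consequence of the hexagon axioms). -/
theorem alpha_induction_monoidal
    [BraidedCategory C] [HasCoequalizers C]
    [∀ X : C, PreservesColimitsOfSize.{0, 0} (tensorLeft X)]
    [∀ X : C, PreservesColimitsOfSize.{0, 0} (tensorRight X)]
    (A : Mon C) :
    ∃ Fp Fm : C ⥤ Bimod A A,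
      (∀ X : C, ∃ h : (Fp.obj X).X = A.X ⊗ X,
        (Fp.obj X).actLeft =
          eqToHom (by rw [h]) ≫ (α_ A.X A.X X).inv ≫ ((MonObj.mul (X := A.X)) ▷ X) ≫ eqToHom h.symm ∧
        (Fp.obj X).actRight =
          eqToHom (by rw [h]) ≫ (α_ A.X X A.X).hom ≫ (A.X ◁ (β_ X A.X).hom) ≫
            (α_ A.X A.X X).inv ≫ ((MonObj.mul (X := A.X)) ▷ X) ≫ eqToHom h.symm) ∧
      (∀ X : C, ∃ h : (Fm.obj X).X = A.X ⊗ X,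
        (Fm.obj X).actLeft =
          eqToHom (by rw [h]) ≫ (α_ A.X A.X X).inv ≫ ((MonObj.mul (X := A.X)) ▷ X) ≫ eqToHom h.symm ∧
        (Fm.obj X).actRight =
          eqToHom (by rw [h]) ≫ (α_ A.X X A.X).hom ≫ (A.X ◁ (β_ A.X X).inv) ≫
            (α_ A.X A.X X).inv ≫ ((MonObj.mul (X := A.X)) ▷ X) ≫ eqToHom h.symm) ∧
      IsMonoidalOnBimod Fp ∧ IsMonoidalOnBimod Fm := by
  refine ⟨AlphaInduction.alphaFunctor A,
    @AlphaInduction.alphaFunctor C _ _ (reverseBraiding C) A,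
    fun X => ⟨rfl, by erw [eqToHom_refl, eqToHom_refl, Category.id_comp, Category.comp_id],
      by erw [eqToHom_refl, eqToHom_refl, Category.id_comp, Category.comp_id]⟩,
    fun X => ⟨rfl, by erw [eqToHom_refl, eqToHom_refl, Category.id_comp, Category.comp_id],
      by erw [eqToHom_refl, eqToHom_refl, Category.id_comp, Category.comp_id]; rfl⟩,
    AlphaInduction.alpha_monoidal A,
    @AlphaInduction.alpha_monoidal C _ _ (reverseBraiding C) _ _ _ A⟩
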